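/- Let N ≥ 1, let σ_w, σ_n, σ_wn > 0 satisfy σ_wn < (σ_w + σ_n)/2, let Δt > 0, f ∈ ℝ^N, let Q be a symmetric positive-semidefinite real N×N matrix, and let Sᵏ ∈ ℝ^N satisfy 0 < Sᵏ_i < 1 for all i; set β = Σ_i Sᵏ_i. Let Φ : [0,1] → ℝ be Φ(x) = x·ln x for x > 0 and Φ(0) = 0, and for a ∈ (0,1) let H_a^0 : [0,1] → ℝ be H_a^0(x) = ∫_a^x H_a^1(t) dt, where H_a^1(t) = (t ln t − a ln a)/(t − a) for t ≠ a and H_a^1(a) = ln a + 1 (this integral converges at the endpoints 0 and 1, so H_a^0 is continuous on [0,1]). Define J(S) = (1/2)·(S − Sᵏ)ᵀ Q (S − Sᵏ) + Σ_i [ Δt·(Φ(S_i) + Φ(1 − S_i)) + σ_w·H⁰_{Sᵏ_i}(S_i) + σ_n·H⁰_{1−Sᵏ_i}(1 − S_i) − (σ_wn/2)·S_i² + f_i·S_i ] on the compact convex set K = { S ∈ ℝ^N : 0 ≤ S_i ≤ 1 for all i, and Σ_i S_i = β }. Then J attains its minimum over K at a unique point S*, and this minimizer satisfies 0 < S*_i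 < 1 for every i. -/

import Mathlib

/-- `H_a^1` : the secant slope of `t ↦ t log t` at `a`, extended continuously at `t = a`. -/
noncomputable def Hone (a t : ℝ) : ℝ :=
  if t = a then Real.log a + 1 else (t * Real.log t - a * Real.log a) / (t - a)

/-- `H_a^0(x) = ∫_a^x H_a^1(t) dt`. -/
noncomputable def Hzero (a x : ℝ) : ℝ := ∫ t in a..x, Hone a t

open Real Set Filter Topology

lemma hone_continuous {a : ℝ} (ha : 0 < a) : Continuous (Hone a) := by
  rw [continuous_iff_continuousAt]
  intro t
  by_cases ht : t = a
  · subst ht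
    have hd : HasDerivAt (fun x => x * Real.log x) (Real.log t + 1) t :=
      Real.hasDerivAt_mul_log (ne_of_gt ha)
    have hslope : Tendsto (slope (fun x => x * Real.log x) t) (𝓝[≠] t) (𝓝 (Real.log t + 1)) :=
      hasDerivAt_iff_tendsto_slope.mp hd
    have heq : Hone t t = Real.log t + 1 := by simp [Hone]
    unfold ContinuousAt
    rw [heq, ← nhdsNE_sup_pure t, tendsto_sup]
    constructor
    · refine hslope.congr' ?_
      filter_upwards [self_mem_nhdsWithin] with x hx
      have hx' : x ≠ t := hx
      simp [Hone, hx', slope_def_field, div_eq_div_iff (sub_ne_zero.mpr hx') (sub_ne_zero.mpr hx')]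
    · rw [← heq]; exact tendsto_pure_nhds _ t
  · have hc : ContinuousAt (fun s => (s * Real.log s - a * Real.log a) / (s - a)) t := by
      apply ContinuousAt.div
      · exact (Real.continuous_mul_log.continuousAt).sub continuousAt_const
      · exact (continuous_id.sub continuous_const).continuousAt
      · exact sub_ne_zero.mpr ht
    apply hc.congr
    filter_upwards [eventually_ne_nhds ht] with x hx
    simp [Hone, hx]

lemma hzero_hasDerivAt {a : ℝ} (ha : 0 < a) (x : ℝ) : HasDerivAt (Hzero a) (Hone a x) x :=
  ((hone_continuous ha).integral_hasStrictDerivAt a x).hasDerivAt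

noncomputable def psi (x : ℝ) : ℝ := x * Real.log x - x ^ 2 / 2

lemma psi_hasDerivAt {x : ℝ} (hx : x ≠ 0) : HasDerivAt psi (Real.log x + 1 - x) x := by
  have h1 := Real.hasDerivAt_mul_log hx
  have h2 : HasDerivAt (fun x : ℝ => x ^ 2 / 2) x x := by
    simpa using (hasDerivAt_pow 2 x).div_const 2
  exact h1.sub h2

lemma psi_convex : ConvexOn ℝ (Icc (0:ℝ) 1) psi := by
  have hcont : ContinuousOn psi (Icc 0 1) :=
    (Real.continuous_mul_log.sub (by continuity)).continuousOn
  refine convexOn_of_hasDerivWithinAt2_nonneg (convex_Icc 0 1) hcont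
    (f' := fun x => Real.log x + 1 - x) (f'' := fun x => 1 / x - 1) ?_ ?_ ?_
  · rw [interior_Icc]
    intro x hx
    exact (psi_hasDerivAt (ne_of_gt hx.1)).hasDerivWithinAt
  · rw [interior_Icc]
    intro x hx
    have : HasDerivAt (fun x : ℝ => Real.log x + 1 - x) (1 / x - 1) x := by
      exact (((Real.hasDerivAt_log (ne_of_gt hx.1)).add_const 1).sub (hasDerivAt_id x)).congr_deriv (by rw [one_div])
    exact this.hasDerivWithinAt
  · rw [interior_Icc]
    intro x hx
    have h1 : 1 ≤ 1 / x := (le_div_iff₀ hx.1).mpr (by linarith [hx.2])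
    linarith

lemma hone_eq_slope {a t : ℝ} (ht : t ≠ a) : Hone a t - t / 2 = slope psi a t + a / 2 := by
  have hta : t - a ≠ 0 := sub_ne_zero.mpr ht
  simp only [Hone, if_neg ht, slope_def_field, psi]
  field_simp
  ring

lemma hone_strong_mono {a : ℝ} (ha : a ∈ Ioo (0:ℝ) 1) :
    MonotoneOn (fun t => Hone a t - t / 2) (Icc (0:ℝ) 1) := by
  have haI : a ∈ Icc (0:ℝ) 1 := ⟨ha.1.le, ha.2.le⟩
  have hda : HasDerivAt psi (Real.log a + 1 - a) a := psi_hasDerivAt (ne_of_gt ha.1)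
  have honea : Hone a a - a / 2 = (Real.log a + 1 - a) + a / 2 := by
    simp [Hone]; ring
  intro s hs t ht hst
  show Hone a s - s / 2 ≤ Hone a t - t / 2
  by_cases hsa : s = a
  · by_cases hta : t = a
    · rw [hsa, hta]
    · have hst' : a < t := lt_of_le_of_ne (hsa ▸ hst) (Ne.symm hta)
      have h := psi_convex.le_slope_of_hasDerivAt haI ht hst' hda
      rw [hsa, honea, hone_eq_slope hta]
      linarith
  · by_cases hta : t = a
    · have hst' : s < a := lt_of_le_of_ne (hta ▸ hst) hsa
      have h := psi_convex.slope_le_of_hasDerivAt hs haI hst' hda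
      rw [slope_comm] at h
      rw [hta, honea, hone_eq_slope hsa]
      linarith
    · have h := psi_convex.secant_mono haI hs ht hsa hta hst
      rw [hone_eq_slope hsa, hone_eq_slope hta]
      simp only [slope_def_field] at *
      linarith

lemma hzero_conv {a : ℝ} (ha : a ∈ Ioo (0:ℝ) 1) :
    ConvexOn ℝ (Icc (0:ℝ) 1) (fun x => Hzero a x - x ^ 2 / 4) := by
  have hFd : ∀ x : ℝ, HasDerivAt (fun x => Hzero a x - x ^ 2 / 4) (Hone a x - x / 2) x := by
    intro x
    have h2 : HasDerivAt (fun x : ℝ => x ^ 2 / 4) (x / 2) x := by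
      have := (hasDerivAt_pow 2 x).div_const 4
      simpa using this.congr_deriv (by ring)
    exact (hzero_hasDerivAt ha.1 x).sub h2
  refine MonotoneOn.convexOn_of_deriv (convex_Icc 0 1)
    (fun x _ => (hFd x).differentiableAt.continuousAt.continuousWithinAt)
    (fun x _ => (hFd x).differentiableAt.differentiableWithinAt) ?_
  rw [interior_Icc]
  intro x hx y hy hxy
  rw [(hFd x).deriv, (hFd y).deriv]
  exact hone_strong_mono ha ⟨hx.1.le, hx.2.le⟩ ⟨hy.1.le, hy.2.le⟩ hxy

lemma g_strictconv (σw σn σwn Δt fi : ℝ) (hσw : 0 < σw) (hσn : 0 < σn)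
    (hcond : σwn < (σw + σn) / 2) (hΔt : 0 < Δt) {a b : ℝ}
    (ha : a ∈ Ioo (0:ℝ) 1) (hb : b ∈ Ioo (0:ℝ) 1) :
    StrictConvexOn ℝ (Icc (0:ℝ) 1) (fun x =>
      Δt * (x * Real.log x + (1 - x) * Real.log (1 - x)) + σw * Hzero a x +
        σn * Hzero b (1 - x) - σwn / 2 * x ^ 2 + fi * x) := by
  constructor
  · exact convex_Icc 0 1
  intro x hx y hy hxy p q hp hq hpq
  simp only [smul_eq_mul]
  have h1x : (1:ℝ) - x ∈ Icc (0:ℝ) 1 := ⟨by linarith [hx.2], by linarith [hx.1]⟩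
  have h1y : (1:ℝ) - y ∈ Icc (0:ℝ) 1 := ⟨by linarith [hy.2], by linarith [hy.1]⟩
  have hmid : p * (1 - x) + q * (1 - y) = 1 - (p * x + q * y) := by linear_combination hpq
  have hφ := Real.convexOn_mul_log.2 hx.1 hy.1 hp.le hq.le hpq
  have hφ' := Real.convexOn_mul_log.2 h1x.1 h1y.1 hp.le hq.le hpq
  simp only [smul_eq_mul] at hφ hφ'
  rw [hmid] at hφ'
  have hHw := (hzero_conv ha).2 hx hy hp.le hq.le hpq
  have hHn := (hzero_conv hb).2 h1x h1y hp.le hq.le hpq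
  simp only [smul_eq_mul] at hHw hHn
  rw [hmid] at hHn
  have hq' : q = 1 - p := by linarith
  subst hq'
  have hsq : p * x ^ 2 + (1 - p) * y ^ 2 - (p * x + (1 - p) * y) ^ 2
      = p * (1 - p) * (x - y) ^ 2 := by ring
  have hsq2 : p * (1 - x) ^ 2 + (1 - p) * (1 - y) ^ 2 - (1 - (p * x + (1 - p) * y)) ^ 2
      = p * (1 - p) * (x - y) ^ 2 := by ring
  have hxy' : x - y ≠ 0 := sub_ne_zero.mpr hxy
  have hgap : 0 < p * (1 - p) * (x - y) ^ 2 := by positivity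
  have hc : 0 < σw / 4 + σn / 4 - σwn / 2 := by linarith
  have h5 : 0 < (σw / 4 + σn / 4 - σwn / 2) * (p * (1 - p) * (x - y) ^ 2) := mul_pos hc hgap
  have h1 := mul_le_mul_of_nonneg_left hφ hΔt.le
  have h2 := mul_le_mul_of_nonneg_left hφ' hΔt.le
  have h3 := mul_le_mul_of_nonneg_left hHw hσw.le
  have h4 := mul_le_mul_of_nonneg_left hHn hσn.le
  have e1 : σw / 4 * (p * x ^ 2 + (1 - p) * y ^ 2) - σw / 4 * (p * x + (1 - p) * y) ^ 2
      = σw / 4 * (p * (1 - p) * (x - y) ^ 2) := by linear_combination (σw / 4) * hsq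
  have e2 : σn / 4 * (p * (1 - x) ^ 2 + (1 - p) * (1 - y) ^ 2)
        - σn / 4 * (1 - (p * x + (1 - p) * y)) ^ 2
      = σn / 4 * (p * (1 - p) * (x - y) ^ 2) := by linear_combination (σn / 4) * hsq2
  have e3 : σwn / 2 * (p * x ^ 2 + (1 - p) * y ^ 2) - σwn / 2 * (p * x + (1 - p) * y) ^ 2
      = σwn / 2 * (p * (1 - p) * (x - y) ^ 2) := by linear_combination (σwn / 2) * hsq
  linarith [h1, h2, h3, h4, e1, e2, e3, h5]

lemma slope_right_atBot :
    Tendsto (fun ε : ℝ => (((0:ℝ) + ε) * Real.log (0 + ε) - 0 * Real.log 0) / ε)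
      (𝓝[>] (0:ℝ)) atBot := by
  refine Real.tendsto_log_nhdsGT_zero.congr' ?_
  filter_upwards [self_mem_nhdsWithin] with ε (hε : 0 < ε)
  rw [zero_add, zero_mul, sub_zero]
  field_simp

lemma slope_right_finite {c : ℝ} (hc : c ≠ 0) :
    ∃ L, Tendsto (fun ε : ℝ => ((c + ε) * Real.log (c + ε) - c * Real.log c) / ε)
      (𝓝[>] (0:ℝ)) (𝓝 L) := by
  have hd : HasDerivAt (fun ε : ℝ => (c + ε) * Real.log (c + ε)) ((Real.log c + 1) * 1) 0 := by
    have := (Real.hasDerivAt_mul_log (by simpa using hc : c + (0:ℝ) ≠ 0)).comp 0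
      ((hasDerivAt_id (0:ℝ)).const_add c)
    simpa [Function.comp_def] using this
  refine ⟨(Real.log c + 1) * 1, ?_⟩
  have hslope := hasDerivAt_iff_tendsto_slope.mp hd
  refine (hslope.mono_left (nhdsWithin_mono _ fun x hx => ne_of_gt hx)).congr' ?_
  filter_upwards [self_mem_nhdsWithin] with ε (hε : 0 < ε)
  simp [slope_def_field]

lemma slope_left_finite {c : ℝ} (hc : c ≠ 0) :
    ∃ L, Tendsto (fun ε : ℝ => ((c - ε) * Real.log (c - ε) - c * Real.log c) / ε)
      (𝓝[>] (0:ℝ)) (𝓝 L) := by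
  have hd : HasDerivAt (fun ε : ℝ => (c - ε) * Real.log (c - ε)) ((Real.log c + 1) * (-1)) 0 := by
    have := (Real.hasDerivAt_mul_log (by simpa using hc : c - (0:ℝ) ≠ 0)).comp 0
      ((hasDerivAt_id (0:ℝ)).neg.const_add c)
    simpa [sub_eq_add_neg, Function.comp_def] using this
  refine ⟨(Real.log c + 1) * (-1), ?_⟩
  have hslope := hasDerivAt_iff_tendsto_slope.mp hd
  refine (hslope.mono_left (nhdsWithin_mono _ fun x hx => ne_of_gt hx)).congr' ?_
  filter_upwards [self_mem_nhdsWithin] with ε (hε : 0 < ε)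
  simp [slope_def_field]

lemma combine4 {l : Filter ℝ} {t1 t2 t3 t4 : ℝ → ℝ} {L2 L3 : ℝ}
    (h2 : Tendsto t2 l (𝓝 L2)) (h3 : Tendsto t3 l (𝓝 L3))
    (h1 : Tendsto t1 l atBot ∨ ∃ L, Tendsto t1 l (𝓝 L))
    (h4 : Tendsto t4 l atBot ∨ ∃ L, Tendsto t4 l (𝓝 L))
    (key : Tendsto t1 l atBot ∨ Tendsto t4 l atBot) :
    Tendsto (fun ε => t1 ε + t2 ε + t3 ε + t4 ε) l atBot := by
  rcases key with k1 | k4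
  · rcases h4 with h4 | ⟨L4, h4⟩
    · have h14 : Tendsto (fun ε => t1 ε + t4 ε) l atBot := Tendsto.atBot_add_atBot k1 h4
      exact (Tendsto.add_atBot (h2.add h3) h14).congr (fun ε => by ring)
    · have h234 : Tendsto (fun ε => t2 ε + t3 ε + t4 ε) l (𝓝 (L2 + L3 + L4)) :=
        (h2.add h3).add h4
      exact (Tendsto.add_atBot h234 k1).congr (fun ε => by ring)
  · rcases h1 with h1 | ⟨L1, h1⟩
    · have h14 : Tendsto (fun ε => t1 ε + t4 ε) l atBot := Tendsto.atBot_add_atBot h1 k4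
      exact (Tendsto.add_atBot (h2.add h3) h14).congr (fun ε => by ring)
    · exact Tendsto.add_atBot (((h1.add h2).add h3)) k4

set_option maxHeartbeats 2000000 in
lemma perturb {N : ℕ} (σw σn σwn Δt : ℝ) (hΔt : 0 < Δt)
    (f : Fin N → ℝ) (Q : Matrix (Fin N) (Fin N) ℝ) (Sk : Fin N → ℝ)
    (hSk : ∀ i, Sk i ∈ Set.Ioo (0:ℝ) 1)
    (J : (Fin N → ℝ) → ℝ)
    (hJ : ∀ X : Fin N → ℝ, J X = (1 / 2) * dotProduct (X - Sk) (Q.mulVec (X - Sk)) +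
      ∑ m, (Δt * (X m * Real.log (X m) + (1 - X m) * Real.log (1 - X m)) +
        σw * Hzero (Sk m) (X m) + σn * Hzero (1 - Sk m) (1 - X m) -
        σwn / 2 * (X m) ^ 2 + f m * X m))
    (S : Fin N → ℝ) (hS : ∀ m, S m ∈ Icc (0:ℝ) 1)
    (hsum : ∑ m, S m = ∑ m, Sk m)
    (i j : Fin N) (hij : i ≠ j) (hSi : S i < 1) (hSj : 0 < S j)
    (hsing : S i = 0 ∨ S j = 1) :
    ∃ T : Fin N → ℝ, (∀ m, T m ∈ Icc (0:ℝ) 1) ∧ (∑ m, T m = ∑ m, Sk m) ∧ J T < J S := by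
  classical
  set l : Filter ℝ := 𝓝[>] (0:ℝ) with hl
  set d : Fin N → ℝ := fun m => (if m = i then (1:ℝ) else 0) - (if m = j then 1 else 0) with hd
  set P : ℝ → Fin N → ℝ := fun ε m => S m + ε * d m with hP
  have hdi : d i = 1 := by simp [hd, hij]
  have hdj : d j = -1 := by simp [hd, Ne.symm hij]
  have hdm : ∀ m, m ≠ i → m ≠ j → d m = 0 := by intro m h1 h2; simp [hd, h1, h2]
  have hPi : ∀ ε, P ε i = S i + ε := by intro ε; simp [hP, hdi]
  have hPj : ∀ ε, P ε j = S j - ε := by intro ε; simp [hP, hdj]; ring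
  have hPm : ∀ ε, ∀ m, m ≠ i → m ≠ j → P ε m = S m := by
    intro ε m h1 h2; simp [hP, hdm m h1 h2]
  have hdsum : ∑ m, d m = 0 := by
    simp [hd, Finset.sum_sub_distrib]
  have hPsum : ∀ ε, ∑ m, P ε m = ∑ m, Sk m := by
    intro ε
    simp only [hP]
    rw [Finset.sum_add_distrib, ← Finset.mul_sum, hdsum, mul_zero, add_zero, hsum]
  -- the per-coordinate smooth parts are differentiable
  have hHzw : ∀ m : Fin N, Differentiable ℝ (Hzero (Sk m)) :=
    fun m x => (hzero_hasDerivAt (hSk m).1 x).differentiableAt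
  have hHzn : ∀ m : Fin N, Differentiable ℝ (Hzero (1 - Sk m)) :=
    fun m x => (hzero_hasDerivAt (by linarith [(hSk m).2] : (0:ℝ) < 1 - Sk m) x).differentiableAt
  -- quadratic part expansion
  obtain ⟨c1, c2, hquad⟩ : ∃ c1 c2 : ℝ, ∀ ε : ℝ,
      (1 / 2) * dotProduct (P ε - Sk) (Q.mulVec (P ε - Sk)) =
        (1 / 2) * dotProduct (S - Sk) (Q.mulVec (S - Sk)) + ε * c1 + ε ^ 2 * c2 := by
    refine ⟨(1/2) * (dotProduct (S - Sk) (Q.mulVec d) +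
      dotProduct d (Q.mulVec (S - Sk))), (1/2) * dotProduct d (Q.mulVec d),
      fun ε => ?_⟩
    have hPe : P ε - Sk = (S - Sk) + ε • d := by
      funext m; simp [hP, smul_eq_mul]; ring
    rw [hPe, Matrix.mulVec_add, Matrix.mulVec_smul, add_dotProduct,
      smul_dotProduct, dotProduct_add, dotProduct_add,
      dotProduct_smul, dotProduct_smul]
    simp only [smul_eq_mul]
    ring
  -- splitting of the sum part
  have key : ∀ ε : ℝ, ∀ (g : Fin N → ℝ → ℝ), ∑ m, g m (P ε m) - ∑ m, g m (S m) =
      (g i (S i + ε) - g i (S i)) + (g j (S j - ε) - g j (S j)) := by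
    intro ε g
    rw [← Finset.sum_sub_distrib]
    rw [← Finset.sum_subset (Finset.subset_univ ({i, j} : Finset (Fin N)))]
    · rw [Finset.sum_pair hij, hPi, hPj]
    · intro m _ hm
      simp only [Finset.mem_insert, Finset.mem_singleton] at hm
      push_neg at hm
      rw [hPm ε m hm.1 hm.2, sub_self]
  -- the differentiable part of the increment
  set A : ℝ → ℝ := fun ε =>
    (ε * c1 + ε ^ 2 * c2) +
      (((σw * Hzero (Sk i) (S i + ε) + σn * Hzero (1 - Sk i) (1 - (S i + ε)) -
          σwn / 2 * (S i + ε) ^ 2 + f i * (S i + ε)) -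
        (σw * Hzero (Sk i) (S i) + σn * Hzero (1 - Sk i) (1 - S i) -
          σwn / 2 * (S i) ^ 2 + f i * S i)) +
      ((σw * Hzero (Sk j) (S j - ε) + σn * Hzero (1 - Sk j) (1 - (S j - ε)) -
          σwn / 2 * (S j - ε) ^ 2 + f j * (S j - ε)) -
        (σw * Hzero (Sk j) (S j) + σn * Hzero (1 - Sk j) (1 - S j) -
          σwn / 2 * (S j) ^ 2 + f j * S j))) with hA
  have hA0 : A 0 = 0 := by norm_num [hA]
  have hAdiff : DifferentiableAt ℝ A 0 := by
    rw [hA]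
    have di : DifferentiableAt ℝ (fun ε : ℝ => S i + ε) 0 := differentiableAt_id.const_add _
    have dj : DifferentiableAt ℝ (fun ε : ℝ => S j - ε) 0 :=
      (differentiableAt_const (S j)).sub differentiableAt_id
    have di' : DifferentiableAt ℝ (fun ε : ℝ => 1 - (S i + ε)) 0 :=
      (differentiableAt_const 1).sub di
    have dj' : DifferentiableAt ℝ (fun ε : ℝ => 1 - (S j - ε)) 0 :=
      (differentiableAt_const 1).sub dj
    have d1 : DifferentiableAt ℝ (fun ε : ℝ => Hzero (Sk i) (S i + ε)) 0 :=
      DifferentiableAt.comp 0 (hHzw i _) di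
    have d2 : DifferentiableAt ℝ (fun ε : ℝ => Hzero (1 - Sk i) (1 - (S i + ε))) 0 :=
      DifferentiableAt.comp 0 (hHzn i _) di'
    have d3 : DifferentiableAt ℝ (fun ε : ℝ => Hzero (Sk j) (S j - ε)) 0 :=
      DifferentiableAt.comp 0 (hHzw j _) dj
    have d4 : DifferentiableAt ℝ (fun ε : ℝ => Hzero (1 - Sk j) (1 - (S j - ε))) 0 :=
      DifferentiableAt.comp 0 (hHzn j _) dj'
    have p1 : DifferentiableAt ℝ (fun ε : ℝ => ε * c1 + ε ^ 2 * c2) 0 :=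
      (differentiableAt_id.mul_const c1).add ((differentiableAt_pow 2).mul_const c2)
    have q1 : DifferentiableAt ℝ (fun ε : ℝ => σw * Hzero (Sk i) (S i + ε) +
        σn * Hzero (1 - Sk i) (1 - (S i + ε)) - σwn / 2 * (S i + ε) ^ 2 + f i * (S i + ε)) 0 :=
      (((d1.const_mul σw).add (d2.const_mul σn)).sub ((di.pow 2).const_mul (σwn / 2))).add
        (di.const_mul (f i))
    have q2 : DifferentiableAt ℝ (fun ε : ℝ => σw * Hzero (Sk j) (S j - ε) +
        σn * Hzero (1 - Sk j) (1 - (S j - ε)) - σwn / 2 * (S j - ε) ^ 2 + f j * (S j - ε)) 0 :=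
      (((d3.const_mul σw).add (d4.const_mul σn)).sub ((dj.pow 2).const_mul (σwn / 2))).add
        (dj.const_mul (f j))
    exact p1.add ((q1.sub_const _).add (q2.sub_const _))
  have hAslope : Tendsto (fun ε => A ε / ε) l (𝓝 (deriv A 0)) := by
    have hs := hasDerivAt_iff_tendsto_slope.mp hAdiff.hasDerivAt
    refine (hs.mono_left (nhdsWithin_mono _ fun x hx => ne_of_gt hx)).congr' ?_
    filter_upwards [self_mem_nhdsWithin] with ε (hε : 0 < ε)
    rw [slope_def_field, hA0, sub_zero, sub_zero]
  -- the full increment identity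
  have hJA : ∀ ε : ℝ, J (P ε) - J S = A ε + Δt *
      (((S i + ε) * Real.log (S i + ε) - S i * Real.log (S i)) +
       ((1 - (S i + ε)) * Real.log (1 - (S i + ε)) - (1 - S i) * Real.log (1 - S i)) +
       ((S j - ε) * Real.log (S j - ε) - S j * Real.log (S j)) +
       ((1 - (S j - ε)) * Real.log (1 - (S j - ε)) - (1 - S j) * Real.log (1 - S j))) := by
    intro ε
    have hk := key ε (fun m x => Δt * (x * Real.log x + (1 - x) * Real.log (1 - x)) +
      σw * Hzero (Sk m) x + σn * Hzero (1 - Sk m) (1 - x) - σwn / 2 * x ^ 2 + f m * x)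
    simp only [hA]
    rw [hJ (P ε), hJ S]
    linear_combination hquad ε + hk
  -- limits of the four slope terms
  have hT2 : ∃ L, Tendsto (fun ε : ℝ =>
      ((1 - (S i + ε)) * Real.log (1 - (S i + ε)) - (1 - S i) * Real.log (1 - S i)) / ε)
      l (𝓝 L) := by
    obtain ⟨L, h⟩ := slope_left_finite (c := 1 - S i) (by intro h; rw [sub_eq_zero] at h; linarith)
    exact ⟨L, by simpa only [show ∀ ε : ℝ, 1 - S i - ε = 1 - (S i + ε) from fun ε => by ring]
      using h⟩
  have hT3 : ∃ L, Tendsto (fun ε : ℝ =>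
      ((S j - ε) * Real.log (S j - ε) - S j * Real.log (S j)) / ε) l (𝓝 L) :=
    slope_left_finite (ne_of_gt hSj)
  have hT1 : Tendsto (fun ε : ℝ =>
        ((S i + ε) * Real.log (S i + ε) - S i * Real.log (S i)) / ε) l atBot ∨
      ∃ L, Tendsto (fun ε : ℝ =>
        ((S i + ε) * Real.log (S i + ε) - S i * Real.log (S i)) / ε) l (𝓝 L) := by
    rcases eq_or_lt_of_le (hS i).1 with h | h
    · left; rw [← h]; exact slope_right_atBot
    · right; exact slope_right_finite (ne_of_gt h)
  have hT4 : Tendsto (fun ε : ℝ =>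
        ((1 - (S j - ε)) * Real.log (1 - (S j - ε)) - (1 - S j) * Real.log (1 - S j)) / ε)
        l atBot ∨
      ∃ L, Tendsto (fun ε : ℝ =>
        ((1 - (S j - ε)) * Real.log (1 - (S j - ε)) - (1 - S j) * Real.log (1 - S j)) / ε)
        l (𝓝 L) := by
    rcases eq_or_lt_of_le (hS j).2 with h | h
    · left
      simp only [h, sub_self]
      simp only [show ∀ ε : ℝ, 1 - (1 - ε) = 0 + ε from fun ε => by ring]
      exact slope_right_atBot
    · right
      obtain ⟨L, hh⟩ := slope_right_finite (c := 1 - S j) (by intro hc; rw [sub_eq_zero] at hc; linarith)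
      exact ⟨L, by simpa only [show ∀ ε : ℝ, 1 - S j + ε = 1 - (S j - ε) from fun ε => by ring]
        using hh⟩
  have hkey : Tendsto (fun ε : ℝ =>
        ((S i + ε) * Real.log (S i + ε) - S i * Real.log (S i)) / ε) l atBot ∨
      Tendsto (fun ε : ℝ =>
        ((1 - (S j - ε)) * Real.log (1 - (S j - ε)) - (1 - S j) * Real.log (1 - S j)) / ε)
        l atBot := by
    rcases hsing with h | h
    · left; simp only [h]; exact slope_right_atBot
    · right
      simp only [h, sub_self]
      simp only [show ∀ ε : ℝ, 1 - (1 - ε) = 0 + ε from fun ε => by ring]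
      exact slope_right_atBot
  obtain ⟨L2, h2⟩ := hT2
  obtain ⟨L3, h3⟩ := hT3
  have hBt := combine4 h2 h3 hT1 hT4 hkey
  -- full slope tends to -infinity
  have hDtend : Tendsto (fun ε => (J (P ε) - J S) / ε) l atBot := by
    have heq : (fun ε => A ε / ε + Δt *
        (((S i + ε) * Real.log (S i + ε) - S i * Real.log (S i)) / ε +
         ((1 - (S i + ε)) * Real.log (1 - (S i + ε)) - (1 - S i) * Real.log (1 - S i)) / ε +
         ((S j - ε) * Real.log (S j - ε) - S j * Real.log (S j)) / ε +
         ((1 - (S j - ε)) * Real.log (1 - (S j - ε)) - (1 - S j) * Real.log (1 - S j)) / ε))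
        =ᶠ[l] (fun ε => (J (P ε) - J S) / ε) := by
      filter_upwards [self_mem_nhdsWithin] with ε (hε : 0 < ε)
      rw [hJA ε]
      simp only [div_eq_mul_inv]
      ring
    exact Filter.Tendsto.congr' heq (Tendsto.add_atBot hAslope (hBt.const_mul_atBot hΔt))
  -- pick a good ε
  have hε₀ : 0 < min (1 - S i) (S j) := lt_min (by linarith) hSj
  have hev1 := hDtend.eventually (eventually_lt_atBot (0:ℝ))
  have hev2 : ∀ᶠ ε in l, ε ∈ Ioo (0:ℝ) (min (1 - S i) (S j)) :=
    Filter.eventually_of_mem (Ioo_mem_nhdsGT_of_mem ⟨le_refl 0, hε₀⟩) (fun x hx => hx)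
  obtain ⟨ε, hεneg, hεIoo⟩ := (hev1.and hev2).exists
  have hεpos : 0 < ε := hεIoo.1
  refine ⟨P ε, ?_, hPsum ε, ?_⟩
  · intro m
    by_cases hmi : m = i
    · subst hmi
      rw [hPi]
      have h1 := min_le_left (1 - S m) (S j)
      exact ⟨by linarith [(hS m).1], by linarith [hεIoo.2]⟩
    · by_cases hmj : m = j
      · subst hmj
        rw [hPj]
        have h1 := min_le_right (1 - S i) (S m)
        exact ⟨by linarith [hεIoo.2], by linarith [(hS m).2]⟩
      · rw [hPm ε m hmi hmj]; exact hS m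
  · rw [div_neg_iff] at hεneg
    rcases hεneg with ⟨ha, hb⟩ | ⟨ha, hb⟩
    · linarith
    · linarith

set_option maxHeartbeats 2000000 in
lemma main {N : ℕ} (hN : 1 ≤ N) (σw σn σwn Δt : ℝ)
    (hσw : 0 < σw) (hσn : 0 < σn) (hσwn : 0 < σwn) (hcond : σwn < (σw + σn) / 2)
    (hΔt : 0 < Δt) (f : Fin N → ℝ)
    (Q : Matrix (Fin N) (Fin N) ℝ) (hQ : Q.PosSemidef)
    (Sk : Fin N → ℝ) (hSk : ∀ i, Sk i ∈ Set.Ioo (0 : ℝ) 1) :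
    ∃ Sstar ∈ {S : Fin N → ℝ | (∀ i, S i ∈ Set.Icc (0 : ℝ) 1) ∧ ∑ i, S i = ∑ i, Sk i},
      (∀ i, Sstar i ∈ Set.Ioo (0 : ℝ) 1) ∧
      IsMinOn (fun S : Fin N → ℝ =>
        (1 / 2) * dotProduct (S - Sk) (Q.mulVec (S - Sk)) +
        ∑ i, (Δt * (S i * Real.log (S i) + (1 - S i) * Real.log (1 - S i)) +
          σw * Hzero (Sk i) (S i) + σn * Hzero (1 - Sk i) (1 - S i) -
          σwn / 2 * (S i) ^ 2 + f i * S i))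
        {S : Fin N → ℝ | (∀ i, S i ∈ Set.Icc (0 : ℝ) 1) ∧ ∑ i, S i = ∑ i, Sk i} Sstar ∧
      ∀ S ∈ {S : Fin N → ℝ | (∀ i, S i ∈ Set.Icc (0 : ℝ) 1) ∧ ∑ i, S i = ∑ i, Sk i},
        IsMinOn (fun S : Fin N → ℝ =>
          (1 / 2) * dotProduct (S - Sk) (Q.mulVec (S - Sk)) +
          ∑ i, (Δt * (S i * Real.log (S i) + (1 - S i) * Real.log (1 - S i)) +
            σw * Hzero (Sk i) (S i) + σn * Hzero (1 - Sk i) (1 - S i) -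
            σwn / 2 * (S i) ^ 2 + f i * S i))
          {S : Fin N → ℝ | (∀ i, S i ∈ Set.Icc (0 : ℝ) 1) ∧ ∑ i, S i = ∑ i, Sk i} S →
        S = Sstar := by
  classical
  haveI : Nonempty (Fin N) := ⟨⟨0, hN⟩⟩
  set K : Set (Fin N → ℝ) :=
    {S : Fin N → ℝ | (∀ i, S i ∈ Set.Icc (0 : ℝ) 1) ∧ ∑ i, S i = ∑ i, Sk i} with hK
  set J : (Fin N → ℝ) → ℝ := fun S =>
    (1 / 2) * dotProduct (S - Sk) (Q.mulVec (S - Sk)) +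
    ∑ i, (Δt * (S i * Real.log (S i) + (1 - S i) * Real.log (1 - S i)) +
      σw * Hzero (Sk i) (S i) + σn * Hzero (1 - Sk i) (1 - S i) -
      σwn / 2 * (S i) ^ 2 + f i * S i) with hJdef
  have hSkK : Sk ∈ K := ⟨fun i => ⟨(hSk i).1.le, (hSk i).2.le⟩, rfl⟩
  -- K is compact
  have hKcl : IsClosed K := by
    have h1 : IsClosed {S : Fin N → ℝ | ∀ i, S i ∈ Set.Icc (0:ℝ) 1} := by
      have : {S : Fin N → ℝ | ∀ i, S i ∈ Set.Icc (0:ℝ) 1} =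
          ⋂ i, (fun S : Fin N → ℝ => S i) ⁻¹' (Set.Icc 0 1) := by ext S; simp
      rw [this]
      exact isClosed_iInter fun i => isClosed_Icc.preimage (continuous_apply i)
    have h2 : IsClosed {S : Fin N → ℝ | ∑ i, S i = ∑ i, Sk i} :=
      isClosed_eq (continuous_finset_sum _ fun i _ => continuous_apply i) continuous_const
    exact h1.inter h2
  have hKcomp : IsCompact K := by
    refine IsCompact.of_isClosed_subset (isCompact_univ_pi fun _ : Fin N => isCompact_Icc (a := (0:ℝ)) (b := (1:ℝ))) hKcl ?_
    intro S hS m _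
    exact hS.1 m
  -- J is continuous
  have hHzc : ∀ a : ℝ, 0 < a → Continuous (Hzero a) := fun a ha =>
    Differentiable.continuous fun x => (hzero_hasDerivAt ha x).differentiableAt
  have hφc : Continuous (fun x : ℝ => x * Real.log x) := Real.continuous_mul_log
  have hJcont : Continuous J := by
    rw [hJdef]
    apply Continuous.add
    · apply continuous_const.mul
      simp only [dotProduct, Matrix.mulVec, Pi.sub_apply]
      apply continuous_finset_sum; intro m _
      apply Continuous.mul
      · exact (continuous_apply m).sub continuous_const
      · apply continuous_finset_sum; intro k _
        exact continuous_const.mul ((continuous_apply k).sub continuous_const)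
    · apply continuous_finset_sum; intro m _
      have hb : (0:ℝ) < 1 - Sk m := by linarith [(hSk m).2]
      exact ((((continuous_const.mul ((hφc.comp (continuous_apply m)).add
        (hφc.comp (continuous_const.sub (continuous_apply m))))).add
        (continuous_const.mul ((hHzc _ (hSk m).1).comp (continuous_apply m)))).add
        (continuous_const.mul ((hHzc _ hb).comp
          (continuous_const.sub (continuous_apply m))))).sub
        (continuous_const.mul ((continuous_apply m).pow 2))).add
        (continuous_const.mul (continuous_apply m))
  -- existence of a minimizer
  obtain ⟨Sstar, hSstarK, hmin⟩ := hKcomp.exists_isMinOn ⟨Sk, hSkK⟩ hJcont.continuousOn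
  -- K is convex
  have hKconv : Convex ℝ K := by
    intro S hS T hT p q hp hq hpq
    constructor
    · intro m
      have := (convex_Icc (0:ℝ) 1) (hS.1 m) (hT.1 m) hp hq hpq
      simpa [smul_eq_mul] using this
    · simp only [Pi.add_apply, Pi.smul_apply, smul_eq_mul]
      rw [Finset.sum_add_distrib, ← Finset.mul_sum, ← Finset.mul_sum, hS.2, hT.2,
        ← add_mul, hpq, one_mul]
  -- J is strictly convex on K
  have hJsc : StrictConvexOn ℝ K J := by
    refine ⟨hKconv, ?_⟩
    intro S hS T hT hST p q hp hq hpq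
    have hq2 : q = 1 - p := by linarith
    subst hq2
    simp only [smul_eq_mul]
    have hmida : ∀ m : Fin N, (p • S + (1 - p) • T) m = p * S m + (1 - p) * T m := by
      intro m; simp [smul_eq_mul]
    -- quadratic part
    have hmid : (p • S + (1 - p) • T) - Sk = p • (S - Sk) + (1 - p) • (T - Sk) := by
      funext m
      simp only [Pi.add_apply, Pi.sub_apply, Pi.smul_apply, smul_eq_mul]
      ring
    have hexp : ∀ u v : Fin N → ℝ, p * ((1/2) * dotProduct u (Q.mulVec u)) +
        (1 - p) * ((1/2) * dotProduct v (Q.mulVec v)) -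
        (1/2) * dotProduct (p • u + (1 - p) • v)
          (Q.mulVec (p • u + (1 - p) • v)) =
        (1/2) * (p * (1 - p)) * dotProduct (u - v) (Q.mulVec (u - v)) := by
      intro u v
      simp only [Matrix.mulVec_add, Matrix.mulVec_smul, Matrix.mulVec_sub,
        add_dotProduct, sub_dotProduct, smul_dotProduct,
        dotProduct_add, dotProduct_sub, dotProduct_smul, smul_eq_mul]
      ring
    have hpsd : 0 ≤ dotProduct ((S - Sk) - (T - Sk))
        (Q.mulVec ((S - Sk) - (T - Sk))) := by
      have := hQ.dotProduct_mulVec_nonneg ((S - Sk) - (T - Sk))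
      simpa using this
    have hprod : 0 ≤ (1/2) * (p * (1 - p)) * dotProduct ((S - Sk) - (T - Sk))
        (Q.mulVec ((S - Sk) - (T - Sk))) := by
      have : 0 ≤ (1/2) * (p * (1 - p)) := by nlinarith [hp.le, hq.le]
      exact mul_nonneg this hpsd
    have hquad : (1/2) * dotProduct ((p • S + (1 - p) • T) - Sk)
          (Q.mulVec ((p • S + (1 - p) • T) - Sk)) ≤
        p * ((1/2) * dotProduct (S - Sk) (Q.mulVec (S - Sk))) +
        (1 - p) * ((1/2) * dotProduct (T - Sk) (Q.mulVec (T - Sk))) := by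
      rw [hmid]; linarith [hexp (S - Sk) (T - Sk)]
    -- sum part
    obtain ⟨i0, hi0⟩ := Function.ne_iff.mp hST
    have hgsc : ∀ m : Fin N, StrictConvexOn ℝ (Set.Icc (0:ℝ) 1) (fun x =>
        Δt * (x * Real.log x + (1 - x) * Real.log (1 - x)) + σw * Hzero (Sk m) x +
          σn * Hzero (1 - Sk m) (1 - x) - σwn / 2 * x ^ 2 + f m * x) := by
      intro m
      exact g_strictconv σw σn σwn Δt (f m) hσw hσn hcond hΔt (hSk m)
        ⟨by linarith [(hSk m).2], by linarith [(hSk m).1]⟩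
    have hterm_le : ∀ m : Fin N,
        Δt * ((p * S m + (1 - p) * T m) * Real.log (p * S m + (1 - p) * T m) +
          (1 - (p * S m + (1 - p) * T m)) * Real.log (1 - (p * S m + (1 - p) * T m))) +
          σw * Hzero (Sk m) (p * S m + (1 - p) * T m) +
          σn * Hzero (1 - Sk m) (1 - (p * S m + (1 - p) * T m)) -
          σwn / 2 * (p * S m + (1 - p) * T m) ^ 2 + f m * (p * S m + (1 - p) * T m) ≤
        p * (Δt * (S m * Real.log (S m) + (1 - S m) * Real.log (1 - S m)) +
          σw * Hzero (Sk m) (S m) + σn * Hzero (1 - Sk m) (1 - S m) -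
          σwn / 2 * (S m) ^ 2 + f m * S m) +
        (1 - p) * (Δt * (T m * Real.log (T m) + (1 - T m) * Real.log (1 - T m)) +
          σw * Hzero (Sk m) (T m) + σn * Hzero (1 - Sk m) (1 - T m) -
          σwn / 2 * (T m) ^ 2 + f m * T m) := by
      intro m
      by_cases hm : S m = T m
      · rw [hm]
        have harg : p * T m + (1 - p) * T m = T m := by ring
        rw [harg]
        apply le_of_eq
        ring
      · have := (hgsc m).2 (hS.1 m) (hT.1 m) hm hp hq hpq
        simpa [smul_eq_mul] using this.le
    have hterm_lt :
        Δt * ((p * S i0 + (1 - p) * T i0) * Real.log (p * S i0 + (1 - p) * T i0) +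
          (1 - (p * S i0 + (1 - p) * T i0)) * Real.log (1 - (p * S i0 + (1 - p) * T i0))) +
          σw * Hzero (Sk i0) (p * S i0 + (1 - p) * T i0) +
          σn * Hzero (1 - Sk i0) (1 - (p * S i0 + (1 - p) * T i0)) -
          σwn / 2 * (p * S i0 + (1 - p) * T i0) ^ 2 + f i0 * (p * S i0 + (1 - p) * T i0) <
        p * (Δt * (S i0 * Real.log (S i0) + (1 - S i0) * Real.log (1 - S i0)) +
          σw * Hzero (Sk i0) (S i0) + σn * Hzero (1 - Sk i0) (1 - S i0) -
          σwn / 2 * (S i0) ^ 2 + f i0 * S i0) +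
        (1 - p) * (Δt * (T i0 * Real.log (T i0) + (1 - T i0) * Real.log (1 - T i0)) +
          σw * Hzero (Sk i0) (T i0) + σn * Hzero (1 - Sk i0) (1 - T i0) -
          σwn / 2 * (T i0) ^ 2 + f i0 * T i0) := by
      have := (hgsc i0).2 (hS.1 i0) (hT.1 i0) hi0 hp hq hpq
      simpa [smul_eq_mul] using this
    have hsum_lt : ∑ m, (Δt * ((p * S m + (1 - p) * T m) * Real.log (p * S m + (1 - p) * T m) +
          (1 - (p * S m + (1 - p) * T m)) * Real.log (1 - (p * S m + (1 - p) * T m))) +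
          σw * Hzero (Sk m) (p * S m + (1 - p) * T m) +
          σn * Hzero (1 - Sk m) (1 - (p * S m + (1 - p) * T m)) -
          σwn / 2 * (p * S m + (1 - p) * T m) ^ 2 + f m * (p * S m + (1 - p) * T m)) <
        ∑ m, (p * (Δt * (S m * Real.log (S m) + (1 - S m) * Real.log (1 - S m)) +
          σw * Hzero (Sk m) (S m) + σn * Hzero (1 - Sk m) (1 - S m) -
          σwn / 2 * (S m) ^ 2 + f m * S m) +
        (1 - p) * (Δt * (T m * Real.log (T m) + (1 - T m) * Real.log (1 - T m)) +
          σw * Hzero (Sk m) (T m) + σn * Hzero (1 - Sk m) (1 - T m) -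
          σwn / 2 * (T m) ^ 2 + f m * T m)) :=
      Finset.sum_lt_sum (fun m _ => hterm_le m) ⟨i0, Finset.mem_univ i0, hterm_lt⟩
    simp only [hJdef, hmida]
    simp only [Finset.sum_add_distrib, ← Finset.mul_sum] at hsum_lt ⊢
    linarith
  -- minimizers are interior
  have hint : ∀ S, S ∈ K → IsMinOn J K S → ∀ m, S m ∈ Set.Ioo (0:ℝ) 1 := by
    intro S hSK hminS m
    constructor
    · by_contra h
      push_neg at h
      have hm0 : S m = 0 := le_antisymm h (hSK.1 m).1
      have hβpos : 0 < ∑ i, Sk i := Finset.sum_pos (fun i _ => (hSk i).1) Finset.univ_nonempty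
      have hex : ∃ j, 0 < S j := by
        by_contra hno
        push_neg at hno
        have hz : ∑ i, S i = 0 := Finset.sum_eq_zero fun i _ => le_antisymm (hno i) (hSK.1 i).1
        rw [hSK.2] at hz
        linarith
      obtain ⟨j, hj⟩ := hex
      have hij : m ≠ j := by
        intro hh
        rw [hh] at hm0
        linarith
      obtain ⟨T, hT1, hT2, hT3⟩ := perturb σw σn σwn Δt hΔt f Q Sk hSk J (fun X => rfl)
        S hSK.1 hSK.2 m j hij (by rw [hm0]; norm_num) hj (Or.inl hm0)
      have := isMinOn_iff.mp hminS T ⟨hT1, hT2⟩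
      linarith
    · by_contra h
      push_neg at h
      have hm1 : S m = 1 := le_antisymm (hSK.1 m).2 h
      have hβlt : ∑ i, Sk i < (N : ℝ) := by
        calc ∑ i, Sk i < ∑ _i : Fin N, (1:ℝ) :=
              Finset.sum_lt_sum_of_nonempty Finset.univ_nonempty (fun i _ => (hSk i).2)
          _ = N := by simp
      have hex : ∃ j, j ≠ m ∧ S j < 1 := by
        by_contra hno
        push_neg at hno
        have hall : ∀ i, 1 ≤ S i := by
          intro i
          by_cases hi : i = m
          · rw [hi, hm1]
          · exact hno i hi
        have hge : (N:ℝ) ≤ ∑ i, S i := by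
          calc (N:ℝ) = ∑ _i : Fin N, (1:ℝ) := by simp
            _ ≤ ∑ i, S i := Finset.sum_le_sum fun i _ => hall i
        rw [hSK.2] at hge
        linarith
      obtain ⟨j, hjm, hj⟩ := hex
      obtain ⟨T, hT1, hT2, hT3⟩ := perturb σw σn σwn Δt hΔt f Q Sk hSk J (fun X => rfl)
        S hSK.1 hSK.2 j m hjm hj (by rw [hm1]; norm_num) (Or.inr hm1)
      have := isMinOn_iff.mp hminS T ⟨hT1, hT2⟩
      linarith
  exact ⟨Sstar, hSstarK, hint Sstar hSstarK hmin, hmin,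
    fun S hSK hSmin => hJsc.eq_of_isMinOn hSmin hmin hSK hSstarK⟩

/-- Unique solvability and bound preservation for the second-order scheme
(finite-dimensional core): under the parameter constraint `σ_wn < (σ_w + σ_n)/2`,
the discrete energy functional `J` attains its minimum over the constrained set `K`
at a unique point, and this minimizer has all components in `(0,1)`. -/
theorem stmt12 (N : ℕ) (hN : 1 ≤ N) (σw σn σwn Δt : ℝ)
    (hσw : 0 < σw) (hσn : 0 < σn) (hσwn : 0 < σwn) (hcond : σwn < (σw + σn) / 2)
    (hΔt : 0 < Δt) (f : Fin N → ℝ)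
    (Q : Matrix (Fin N) (Fin N) ℝ) (hQ : Q.PosSemidef)
    (Sk : Fin N → ℝ) (hSk : ∀ i, Sk i ∈ Set.Ioo (0 : ℝ) 1) :
    let β : ℝ := ∑ i, Sk i
    let Φ : ℝ → ℝ := fun x => x * Real.log x
    let J : (Fin N → ℝ) → ℝ := fun S =>
      (1 / 2) * dotProduct (S - Sk) (Q.mulVec (S - Sk)) +
      ∑ i, (Δt * (Φ (S i) + Φ (1 - S i)) + σw * Hzero (Sk i) (S i) +
        σn * Hzero (1 - Sk i) (1 - S i) - σwn / 2 * (S i) ^ 2 + f i * S i)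
    let K : Set (Fin N → ℝ) :=
      {S | (∀ i, S i ∈ Set.Icc (0 : ℝ) 1) ∧ ∑ i, S i = β}
    ∃ Sstar ∈ K, (∀ i, Sstar i ∈ Set.Ioo (0 : ℝ) 1) ∧ IsMinOn J K Sstar ∧
      ∀ S ∈ K, IsMinOn J K S → S = Sstar := by
  intro β Φ J K
  exact main hN σw σn σwn Δt hσw hσn hσwn hcond hΔt f Q hQ Sk hSk
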